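/- For every non-negative integer n, the integral over [-1,1] of sqrt(1 - z^2) * P_{2n}(z) with respect to z equals (π * (-1)^n / 4^n) * Σ_{k=0}^{n} C(2n, n-k) * C(2n+2k, 2n) * C(1/2, k+1), where C(1/2, j) denotes the generalized binomial coefficient (1/2)(1/2 - 1)···(1/2 - j + 1)/j!. -/

import Mathlib

/-- Generalized binomial coefficient `C(r, j) = r(r-1)⋯(r-j+1)/j!`. -/
noncomputable def genChoose (r : ℝ) (j : ℕ) : ℝ :=
  (∏ i ∈ Finset.range j, (r - i)) / (Nat.factorial j)

/-- The `n`-th Legendre polynomial via the Rodrigues formula,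
normalized so that `legendre n` evaluates to `1` at `1`. -/
noncomputable def legendre (n : ℕ) : Polynomial ℝ :=
  Polynomial.C (1 / (2 ^ n * (Nat.factorial n) : ℝ)) *
    Polynomial.derivative^[n] ((Polynomial.X ^ 2 - 1) ^ n)

open Real Finset intervalIntegral


lemma Jval (m : ℕ) : ∫ x in (-(π/2))..(π/2), Real.sin x ^ (2*m)
    = π * ∏ i ∈ Finset.range m, (2*(i:ℝ)+1)/(2*i+2) := by
  induction m with
  | zero => simp
  | succ k ih =>
    have h := integral_sin_pow (a := -(π/2)) (b := π/2) (n := 2*k)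
    have h2 : 2 * (k+1) = 2*k + 2 := by ring
    rw [h2, h]
    simp only [Real.sin_pi_div_two, Real.cos_pi_div_two, Real.sin_neg, Real.cos_neg,
      Real.sin_pi_div_two, Real.cos_pi_div_two, mul_zero, sub_zero, zero_sub] at *
    rw [ih, Finset.prod_range_succ]
    push_cast
    ring

lemma moment (k : ℕ) : ∫ z in (-1:ℝ)..1, Real.sqrt (1 - z^2) * z^(2*k)
    = (π * ∏ i ∈ Finset.range k, (2*(i:ℝ)+1)/(2*i+2)) / (2*k+2) := by
  have key : ∫ z in (-1:ℝ)..1, Real.sqrt (1 - z^2) * z^(2*k)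
      = ∫ x in (-(π/2))..(π/2), Real.sin x ^ (2*k) - Real.sin x ^ (2*(k+1)) := by
    calc ∫ z in (-1:ℝ)..1, Real.sqrt (1 - z^2) * z^(2*k)
        = ∫ x in Real.sin (-(π/2))..Real.sin (π/2), Real.sqrt (1 - x^2) * x^(2*k) := by
          rw [Real.sin_neg, Real.sin_pi_div_two]
      _ = ∫ x in (-(π/2))..(π/2),
            (Real.sqrt (1 - Real.sin x^2) * Real.sin x^(2*k)) * Real.cos x :=
          (integral_comp_mul_deriv (fun x _ => Real.hasDerivAt_sin x)
            Real.continuousOn_cos (by fun_prop)).symm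
      _ = ∫ x in (-(π/2))..(π/2), Real.sin x ^ (2*k) - Real.sin x ^ (2*(k+1)) := by
          refine integral_congr_ae (MeasureTheory.ae_of_all _ fun x h => ?_)
          rw [Set.uIoc_of_le (neg_le_self (le_of_lt (half_pos Real.pi_pos))),
            Set.mem_Ioc] at h
          rw [← Real.cos_eq_sqrt_one_sub_sin_sq (le_of_lt h.1) h.2]
          have h2 : Real.cos x * Real.cos x = 1 - Real.sin x ^ 2 := by
            have := Real.sin_sq_add_cos_sq x; nlinarith
          calc Real.cos x * Real.sin x ^ (2*k) * Real.cos x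
              = (Real.cos x * Real.cos x) * Real.sin x ^ (2*k) := by ring
            _ = Real.sin x ^ (2*k) - Real.sin x ^ (2*(k+1)) := by rw [h2]; ring
  rw [key, intervalIntegral.integral_sub (by apply Continuous.intervalIntegrable; fun_prop)
      (by apply Continuous.intervalIntegrable; fun_prop), Jval, Jval,
    Finset.prod_range_succ]
  have hk : (2*(k:ℝ)+2) ≠ 0 := by positivity
  field_simp
  ring

lemma genChoose_succ (r : ℝ) (j : ℕ) :
    genChoose r (j+1) = genChoose r j * (r - j) / (j+1) := by
  unfold genChoose
  rw [Finset.prod_range_succ, Nat.factorial_succ]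
  have h1 : ((Nat.factorial j : ℝ)) ≠ 0 := Nat.cast_ne_zero.mpr (Nat.factorial_ne_zero j)
  have h2 : ((j:ℝ)+1) ≠ 0 := by positivity
  push_cast
  field_simp

lemma genChoose_half (k : ℕ) : genChoose (1/2) (k+1)
    = (-1)^k * (∏ i ∈ Finset.range k, (2*(i:ℝ)+1)/(2*i+2)) / (2*k+2) := by
  induction k with
  | zero => simp [genChoose]
  | succ k ih =>
    rw [genChoose_succ, ih, Finset.prod_range_succ]
    have h1 : (2*(k:ℝ)+2) ≠ 0 := by positivity
    have h2 : ((k:ℝ)+1+1) ≠ 0 := by positivity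
    have h3 : (2*(k:ℝ)+4) ≠ 0 := by positivity
    push_cast
    field_simp
    ring

open Polynomial in
lemma legendre_eval (n : ℕ) (z : ℝ) :
    (legendre (2*n)).eval z = ∑ k ∈ Finset.range (n+1),
      (1/4^n) * ((-1)^n * (-1)^k) * (Nat.choose (2*n) (n-k) : ℝ)
        * (Nat.choose (2*n+2*k) (2*n) : ℝ) * z^(2*k) := by
  have expand : ((Polynomial.X : ℝ[X])^2 - 1)^(2*n)
      = ∑ m ∈ Finset.range (2*n+1),
          Polynomial.C ((-1)^(m+2*n) * (Nat.choose (2*n) m : ℝ)) * Polynomial.X^(2*m) := by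
    rw [sub_pow]
    refine Finset.sum_congr rfl fun m hm => ?_
    rw [one_pow, ← pow_mul]
    simp [map_mul, map_pow, Polynomial.C_eq_natCast]
    ring
  have step1 : (legendre (2*n)).eval z = (1/(2^(2*n) * Nat.factorial (2*n) : ℝ)) *
      ∑ m ∈ Finset.range (2*n+1), ((-1)^(m+2*n) * (Nat.choose (2*n) m : ℝ)
        * (Nat.descFactorial (2*m) (2*n) : ℝ) * z^(2*m-2*n)) := by
    rw [legendre, expand, Polynomial.iterate_derivative_sum]
    simp only [Polynomial.iterate_derivative_C_mul, Polynomial.iterate_derivative_X_pow_eq_C_mul]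
    simp only [Polynomial.eval_mul, Polynomial.eval_C, Polynomial.eval_finset_sum,
      Polynomial.eval_pow, Polynomial.eval_X]
    exact congrArg _ (Finset.sum_congr rfl fun m hm => by ring)
  rw [step1]
  -- restrict the sum to m ∈ [n, 2n], i.e. m = n + k
  have hsub : Finset.Ico n (2*n+1) ⊆ Finset.range (2*n+1) := by
    intro x hx; simp only [Finset.mem_Ico, Finset.mem_range] at *; omega
  have hzero : ∀ m ∈ Finset.range (2*n+1), m ∉ Finset.Ico n (2*n+1) →
      ((-1:ℝ)^(m+2*n) * (Nat.choose (2*n) m : ℝ)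
        * (Nat.descFactorial (2*m) (2*n) : ℝ) * z^(2*m-2*n)) = 0 := by
    intro m hm hm2
    simp only [Finset.mem_Ico, Finset.mem_range] at hm hm2
    have : m < n := by omega
    have : Nat.descFactorial (2*m) (2*n) = 0 :=
      Nat.descFactorial_eq_zero_iff_lt.mpr (by omega)
    rw [this]
    simp
  rw [← Finset.sum_subset hsub hzero, Finset.sum_Ico_eq_sum_range]
  have h21 : 2*n+1-n = n+1 := by omega
  rw [h21, Finset.mul_sum]
  refine Finset.sum_congr rfl fun k hk => ?_
  simp only [Finset.mem_range] at hk
  have hkn : k ≤ n := by omega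
  -- per-term identity
  have e1 : Nat.choose (2*n) (n+k) = Nat.choose (2*n) (n-k) := by
    rw [← Nat.choose_symm (by omega : n+k ≤ 2*n)]
    congr 1
    omega
  have e2 : Nat.descFactorial (2*(n+k)) (2*n)
      = Nat.factorial (2*n) * Nat.choose (2*(n+k)) (2*n) := by
    rw [Nat.descFactorial_eq_factorial_mul_choose]
  have e3 : 2*(n+k) - 2*n = 2*k := by omega
  have e4 : 2*(n+k) = 2*n+2*k := by ring
  rw [e1, e2, e3, e4]
  have hfac : ((Nat.factorial (2*n) : ℝ)) ≠ 0 := Nat.cast_ne_zero.mpr (Nat.factorial_ne_zero _)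
  have hsign : ((-1:ℝ))^(n+k+2*n) = (-1)^n * (-1)^k := by
    rw [show n+k+2*n = n+k+2*n from rfl, pow_add, pow_add, pow_mul]
    simp
  rw [hsign]
  have h4 : ((2:ℝ))^(2*n) = 4^n := by rw [pow_mul]; norm_num
  push_cast
  rw [h4]
  field_simp

theorem stmt_2 (n : ℕ) :
    ∫ z in (-1:ℝ)..1, Real.sqrt (1 - z ^ 2) * (legendre (2 * n)).eval z
      = (Real.pi * (-1) ^ n / 4 ^ n) *
        ∑ k ∈ Finset.range (n + 1),
          (Nat.choose (2 * n) (n - k) : ℝ) * (Nat.choose (2 * n + 2 * k) (2 * n) : ℝ) *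
            genChoose (1 / 2) (k + 1) := by
  have heq : ∀ z : ℝ, Real.sqrt (1 - z ^ 2) * (legendre (2 * n)).eval z
      = ∑ k ∈ Finset.range (n+1),
          ((1/4^n) * ((-1)^n * (-1)^k) * (Nat.choose (2*n) (n-k) : ℝ)
            * (Nat.choose (2*n+2*k) (2*n) : ℝ)) * (Real.sqrt (1 - z^2) * z^(2*k)) := by
    intro z
    rw [legendre_eval, Finset.mul_sum]
    exact Finset.sum_congr rfl fun k _ => by ring
  rw [intervalIntegral.integral_congr (g := fun z => ∑ k ∈ Finset.range (n+1),
          ((1/4^n) * ((-1)^n * (-1)^k) * (Nat.choose (2*n) (n-k) : ℝ)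
            * (Nat.choose (2*n+2*k) (2*n) : ℝ)) * (Real.sqrt (1 - z^2) * z^(2*k)))
      (fun z _ => heq z)]
  rw [intervalIntegral.integral_finset_sum (fun k _ => by
    apply Continuous.intervalIntegrable
    have : Continuous fun z : ℝ => Real.sqrt (1 - z^2) := by fun_prop
    fun_prop)]
  simp_rw [intervalIntegral.integral_const_mul, moment]
  rw [Finset.mul_sum]
  refine Finset.sum_congr rfl fun k hk => ?_
  have hg := genChoose_half k
  have hsq : ((-1:ℝ))^k * (-1)^k = 1 := by
    rw [← pow_add, show k + k = 2*k by ring, pow_mul]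
    norm_num
  rw [hg]
  field_simp
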